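/- arXiv:0910.1856 — 5 statements merged into one kernel-verified Lean document; each statement's English description precedes it below -/
import Mathlib

section
/- Let ~ be an equivalence relation on {1,...,m} with all equivalence classes of size at most w, and let 1 ≤ c ≤ m-1. Then the number of pairs (p,q) with p ~ q, 1 ≤ p ≤ c, and c+1 ≤ q ≤ m is at most (w/m)·c·(m-c). -/
private theorem keyZ (w a b a' b' : ℤ) (ha : 0 ≤ a) (hb : 0 ≤ b) (ha' : 0 ≤ a') (hb' : 0 ≤ b')
    (h : a+b ≤ w) (h' : a'+b' ≤ w) :
    (a'+b')*(a*b) + (a+b)*(a'*b') ≤ w*(a*b') + w*(a'*b) := by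
  rcases le_total (a*b') (a'*b) with hD|hD <;>
  rcases le_total a a' with hA|hA <;>
  rcases le_total b b' with hB|hB <;>
  nlinarith [mul_nonneg (sub_nonneg.2 h) (mul_nonneg ha hb'),
    mul_nonneg (sub_nonneg.2 h) (mul_nonneg ha' hb),
    mul_nonneg (sub_nonneg.2 h') (mul_nonneg ha hb'),
    mul_nonneg (sub_nonneg.2 h') (mul_nonneg ha' hb),
    mul_nonneg (sub_nonneg.2 hA) (sub_nonneg.2 hD),
    mul_nonneg (sub_nonneg.2 hB) (sub_nonneg.2 hD),
    mul_le_mul_of_nonneg_left hB ha, mul_le_mul_of_nonneg_left hB ha',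
    mul_le_mul_of_nonneg_right hA hb, mul_le_mul_of_nonneg_right hA hb']

private theorem keyN (w a b a' b' : ℕ) (h : a+b ≤ w) (h' : a'+b' ≤ w) :
    (a'+b')*(a*b) + (a+b)*(a'*b') ≤ w*(a*b') + w*(a'*b) := by
  have := keyZ (w : ℤ) a b a' b' (by positivity) (by positivity) (by positivity) (by positivity)
    (by exact_mod_cast h) (by exact_mod_cast h')
  exact_mod_cast this

private theorem sum_key {ι : Type*} [Fintype ι] (a b : ι → ℕ) (w : ℕ)
    (h : ∀ i, a i + b i ≤ w) :
    (∑ i, (a i + b i)) * (∑ i, a i * b i) ≤ w * ((∑ i, a i) * (∑ i, b i)) := by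
  have key : ∑ i, ∑ j, ((a j + b j) * (a i * b i) + (a i + b i) * (a j * b j))
      ≤ ∑ i : ι, ∑ j : ι, (w * (a i * b j) + w * (a j * b i)) := by
    apply Finset.sum_le_sum; intro i _; apply Finset.sum_le_sum; intro j _
    exact keyN w (a i) (b i) (a j) (b j) (h i) (h j)
  have e1 : (∑ i, (a i + b i)) * (∑ i, a i * b i)
      = ∑ i : ι, ∑ j : ι, (a j + b j) * (a i * b i) := by
    rw [Finset.sum_mul_sum]; exact Finset.sum_comm
  have e1' : (∑ i, (a i + b i)) * (∑ i, a i * b i)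
      = ∑ i : ι, ∑ j : ι, (a i + b i) * (a j * b j) := by rw [Finset.sum_mul_sum]
  have e2 : w * ((∑ i, a i) * (∑ i, b i)) = ∑ i : ι, ∑ j : ι, w * (a i * b j) := by
    rw [Finset.sum_mul_sum, Finset.mul_sum]
    exact Finset.sum_congr rfl fun i _ => Finset.mul_sum _ _ _
  have e2' : w * ((∑ i, a i) * (∑ i, b i)) = ∑ i : ι, ∑ j : ι, w * (a j * b i) := by
    rw [e2]; exact Finset.sum_comm
  simp only [Finset.sum_add_distrib] at key
  rw [← e1, ← e1', ← e2, ← e2'] at key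
  omega

/-- Lemma (eclasses1), inequality part: if every equivalence class of `R` on `Fin m`
has size at most `w` and `1 ≤ c ≤ m-1`, then the number of `R`-related pairs `(p,q)`
with `p` among the first `c` indices and `q` among the last `m-c` indices
is at most `(w/m)·c·(m-c)`. -/
theorem sum_orbits_eclasses1_bound (m w c : ℕ) (hm : 0 < m) (hw : 0 < w)
    (hc1 : 1 ≤ c) (hc2 : c ≤ m - 1)
    (R : Fin m → Fin m → Prop) [DecidableRel R] (hR : Equivalence R)
    (hclass : ∀ p : Fin m, (Finset.univ.filter (fun q => R p q)).card ≤ w) :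
    m * (Finset.univ.filter (fun pq : Fin m × Fin m =>
        R pq.1 pq.2 ∧ (pq.1 : ℕ) < c ∧ c ≤ (pq.2 : ℕ))).card ≤ w * c * (m - c) := by
  classical
  have hcm : c < m := by omega
  set s : Setoid (Fin m) := ⟨R, hR⟩ with hs
  set P : Finset (Fin m × Fin m) := Finset.univ.filter (fun pq : Fin m × Fin m =>
        R pq.1 pq.2 ∧ (pq.1 : ℕ) < c ∧ c ≤ (pq.2 : ℕ)) with hP
  set A : Finset (Fin m) := Finset.univ.filter (fun p : Fin m => (p : ℕ) < c) with hAdef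
  set B : Finset (Fin m) := Finset.univ.filter (fun p : Fin m => c ≤ (p : ℕ)) with hBdef
  set a : Quotient s → ℕ := fun i => (A.filter (fun p => Quotient.mk s p = i)).card with ha
  set b : Quotient s → ℕ := fun i => (B.filter (fun p => Quotient.mk s p = i)).card with hb
  -- cardinalities of A and B
  have hA : A.card = c := by
    have : A = Finset.Iio (⟨c, hcm⟩ : Fin m) := by
      ext p; simp [hAdef, Fin.lt_def]
    rw [this, Fin.card_Iio]
  have hB : B.card = m - c := by
    have : B = Finset.Ici (⟨c, hcm⟩ : Fin m) := by
      ext p; simp [hBdef, Fin.le_def]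
    rw [this, Fin.card_Ici]
  -- fiberwise sums
  have hsa : ∑ i : Quotient s, a i = c := by
    rw [← hA, Finset.card_eq_sum_card_fiberwise
      (f := fun p : Fin m => Quotient.mk s p) (t := (Finset.univ : Finset (Quotient s)))
      (fun x _ => Finset.mem_univ _)]
  have hsb : ∑ i : Quotient s, b i = m - c := by
    rw [← hB, Finset.card_eq_sum_card_fiberwise
      (f := fun p : Fin m => Quotient.mk s p) (t := (Finset.univ : Finset (Quotient s)))
      (fun x _ => Finset.mem_univ _)]
  -- class size bound
  have hab : ∀ i : Quotient s, a i + b i ≤ w := by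
    intro i
    obtain ⟨p, rfl⟩ := Quotient.exists_rep i
    have hdisj : Disjoint (A.filter (fun q => Quotient.mk s q = Quotient.mk s p))
        (B.filter (fun q => Quotient.mk s q = Quotient.mk s p)) := by
      apply Finset.disjoint_filter_filter
      rw [Finset.disjoint_left]
      intro q hq hq'
      simp [hAdef, hBdef] at hq hq'
      omega
    have hunion : (A.filter (fun q => Quotient.mk s q = Quotient.mk s p)) ∪
        (B.filter (fun q => Quotient.mk s q = Quotient.mk s p))
        = Finset.univ.filter (fun q => R p q) := by
      ext q
      simp only [Finset.mem_union, Finset.mem_filter, hAdef, hBdef, Finset.mem_univ, true_and]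
      constructor
      · rintro (⟨_, h2⟩ | ⟨_, h2⟩) <;> exact hR.symm (Quotient.exact h2)
      · intro h
        have h2 : Quotient.mk s q = Quotient.mk s p := Quotient.sound (hR.symm h)
        rcases lt_or_ge (q : ℕ) c with h1 | h1
        · exact Or.inl ⟨h1, h2⟩
        · exact Or.inr ⟨h1, h2⟩
    calc a (Quotient.mk s p) + b (Quotient.mk s p)
        = (Finset.univ.filter (fun q => R p q)).card := by
          rw [ha, hb, ← Finset.card_union_of_disjoint hdisj, hunion]
      _ ≤ w := hclass p
  -- pair count is sum of products
  have hN : P.card = ∑ i : Quotient s, a i * b i := by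
    rw [Finset.card_eq_sum_card_fiberwise
      (f := fun pq : Fin m × Fin m => Quotient.mk s pq.1)
      (t := (Finset.univ : Finset (Quotient s))) (fun x _ => Finset.mem_univ _)]
    apply Finset.sum_congr rfl
    intro i _
    have hfib : P.filter (fun pq => Quotient.mk s pq.1 = i)
        = (A.filter (fun p => Quotient.mk s p = i)) ×ˢ (B.filter (fun q => Quotient.mk s q = i)) := by
      ext ⟨p, q⟩
      simp only [Finset.mem_filter, Finset.mem_product, hP, hAdef, hBdef,
        Finset.mem_univ, true_and]
      constructor
      · rintro ⟨⟨hr, h1, h2⟩, h3⟩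
        exact ⟨⟨h1, h3⟩, h2, by rw [← h3]; exact (Quotient.sound hr).symm⟩
      · rintro ⟨⟨h1, h3⟩, h2, h4⟩
        exact ⟨⟨Quotient.exact (h3.trans h4.symm), h1, h2⟩, h3⟩
    rw [hfib, Finset.card_product]
  -- conclude
  have hsum : ∑ i : Quotient s, (a i + b i) = m := by
    rw [Finset.sum_add_distrib, hsa, hsb]; omega
  calc m * P.card = (∑ i : Quotient s, (a i + b i)) * (∑ i : Quotient s, a i * b i) := by
        rw [hsum, hN]
    _ ≤ w * ((∑ i : Quotient s, a i) * (∑ i : Quotient s, b i)) := sum_key a b w hab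
    _ = w * c * (m - c) := by rw [hsa, hsb, mul_assoc]
end

section
/- Let ~ be an equivalence relation on {1,...,m} with all equivalence classes of size at most w, and let 1 ≤ c ≤ m-1. If the number of pairs (p,q) with p ~ q, 1 ≤ p ≤ c, c+1 ≤ q ≤ m equals (w/m)·c·(m-c), then ~ has exactly m/w equivalence classes (so w divides m) and each equivalence class contains the same number of elements of {1,...,c}. -/
theorem pair_ineq_int (w a b x y : ℤ) (ha : 0 ≤ a) (hb : 0 ≤ b) (hx : 0 ≤ x) (hy : 0 ≤ y)
    (h1 : a + b ≤ w) (h2 : x + y ≤ w) :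
    (x+y)*(a*b) + (a+b)*(x*y) ≤ w*(a*y) + w*(x*b) := by
  have s1 : 0 ≤ w - (a+b) := by linarith
  have s2 : 0 ≤ w - (x+y) := by linarith
  rcases le_total (a*y) (x*b) with h | h
  · rcases le_total y b with h' | h'
    · nlinarith [mul_nonneg (sub_nonneg.2 h) (sub_nonneg.2 h'), mul_nonneg (mul_nonneg ha hy) s2, mul_nonneg (mul_nonneg hx hb) s1]
    · rcases hy.eq_or_lt with rfl | hy'
      · have hb0 : b = 0 := le_antisymm h' hb
        subst hb0; nlinarith [mul_nonneg (mul_nonneg hx hb) s1]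
      · have hax : a ≤ x := by
          have := mul_le_mul_of_nonneg_right h' hx
          nlinarith
        nlinarith [mul_nonneg (sub_nonneg.2 hax) (sub_nonneg.2 h), mul_nonneg (mul_nonneg ha hy) s1, mul_nonneg (mul_nonneg hx hb) s2]
  · rcases le_total a x with h' | h'
    · rcases hx.eq_or_lt with rfl | hx'
      · have ha0 : a = 0 := le_antisymm h' ha
        subst ha0; nlinarith [mul_nonneg (mul_nonneg ha hy) s1]
      · have hby : b ≤ y := by nlinarith
        nlinarith [mul_nonneg (sub_nonneg.2 h) (sub_nonneg.2 hby), mul_nonneg (mul_nonneg ha hy) s2, mul_nonneg (mul_nonneg hx hb) s1]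
    · nlinarith [mul_nonneg (sub_nonneg.2 h) (sub_nonneg.2 h'), mul_nonneg (mul_nonneg ha hy) s1, mul_nonneg (mul_nonneg hx hb) s2]

theorem pair_ineq_nat (w a b x y : ℕ) (h1 : a + b ≤ w) (h2 : x + y ≤ w) :
    (x+y)*(a*b) + (a+b)*(x*y) ≤ w*(a*y) + w*(x*b) := by
  have := pair_ineq_int (w : ℤ) a b x y (by positivity) (by positivity) (by positivity)
    (by positivity) (by exact_mod_cast h1) (by exact_mod_cast h2)
  exact_mod_cast this

theorem pair_eqcase_nat (w a b x y : ℕ) (ha : 0 < a) (hb : 0 < b) (hab : a + b = w)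
    (hs : x + y ≤ w) (hpos : 0 < x + y)
    (hdiag : (x+y)*(x*y) + (x+y)*(x*y) = w*(x*y) + w*(x*y))
    (hcross : (x+y)*(a*b) + (a+b)*(x*y) = w*(a*y) + w*(x*b)) :
    x = a ∧ y = b := by
  have ha' : (0:ℤ) < a := by exact_mod_cast ha
  have hb' : (0:ℤ) < b := by exact_mod_cast hb
  have hab' : (a:ℤ) + b = w := by exact_mod_cast hab
  have hpos' : (0:ℤ) < x + y := by exact_mod_cast hpos
  have hdiag' : ((x:ℤ)+y)*(x*y) + (x+y)*(x*y) = w*(x*y) + w*(x*y) := by exact_mod_cast hdiag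
  have hcross' : ((x:ℤ)+y)*(a*b) + (a+b)*(x*y) = w*(a*y) + w*(x*b) := by exact_mod_cast hcross
  have hx : (0:ℤ) ≤ x := by positivity
  have hy : (0:ℤ) ≤ y := by positivity
  suffices h : (x:ℤ) = a ∧ (y:ℤ) = b by
    exact ⟨by exact_mod_cast h.1, by exact_mod_cast h.2⟩
  rcases hx.eq_or_lt with hx0 | hx'
  · exfalso
    have hy' : (0:ℤ) < y := by linarith
    rw [← hx0] at hcross'
    have key : (a:ℤ)*a*y = 0 := by linear_combination (↑a*↑y)*hab' - hcross'
    nlinarith [mul_pos (mul_pos ha' ha') hy']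
  · rcases hy.eq_or_lt with hy0 | hy'
    · exfalso
      rw [← hy0] at hcross'
      have key : (b:ℤ)*b*x = 0 := by linear_combination (↑x*↑b)*hab' - hcross'
      nlinarith [mul_pos (mul_pos hb' hb') hx']
    · have hxyw : (x:ℤ) + y = w := by
        have h2 : (x*y)*((x:ℤ)+y) = (x*y)*w := by linarith
        exact mul_left_cancel₀ (ne_of_gt (mul_pos hx' hy')) h2
      have hw : (0:ℤ) < w := by linarith
      have h4 : (a:ℤ)*b + x*y = a*y + x*b := by
        have h5 : (w:ℤ)*(a*b + x*y) = w*(a*y + x*b) := by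
          linear_combination hcross' - (↑a*↑b)*hxyw - (↑x*↑y)*hab'
        exact mul_left_cancel₀ hw.ne' h5
      have h6 : ((a:ℤ) - x)*((b:ℤ) - y) = 0 := by linear_combination h4
      rcases mul_eq_zero.1 h6 with h7 | h7
      · constructor <;> linarith
      · constructor <;> linarith

/-- Lemma (eclasses1), equality case: if the count of `R`-related pairs across the cut
at `c` attains the bound `(w/m)·c·(m-c)`, then `R` has exactly `m/w` equivalence classes
(each of size exactly `w`, so `w ∣ m`) and each class contains the same number
(namely `c·w/m`) of elements among the first `c` indices. -/
theorem sum_orbits_eclasses1_equality (m w c : ℕ) (hm : 0 < m) (hw : 0 < w)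
    (hc1 : 1 ≤ c) (hc2 : c ≤ m - 1)
    (R : Fin m → Fin m → Prop) [DecidableRel R] (hR : Equivalence R)
    (hclass : ∀ p : Fin m, (Finset.univ.filter (fun q => R p q)).card ≤ w)
    (heq : m * (Finset.univ.filter (fun pq : Fin m × Fin m =>
        R pq.1 pq.2 ∧ (pq.1 : ℕ) < c ∧ c ≤ (pq.2 : ℕ))).card = w * c * (m - c)) :
    w ∣ m ∧
    (Finset.univ.image (fun p : Fin m => Finset.univ.filter (fun q => R p q))).card = m / w ∧
    (∀ p : Fin m, (Finset.univ.filter (fun q => R p q)).card = w) ∧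
    (∀ p : Fin m,
      m * (Finset.univ.filter (fun q : Fin m => R p q ∧ (q : ℕ) < c)).card = w * c) := by
  classical
  have hcm : c < m := by omega
  set C : Fin m → Finset (Fin m) := fun p => Finset.univ.filter (fun q => R p q) with hCdef
  set K : Finset (Finset (Fin m)) := Finset.univ.image C with hKdef
  have hmemC : ∀ p q : Fin m, q ∈ C p ↔ R p q := by
    intro p q; simp [hCdef]
  have hCeq : ∀ p q : Fin m, R p q → C p = C q := by
    intro p q hpq
    ext r
    simp only [hmemC]
    exact ⟨fun h => hR.trans (hR.symm hpq) h, fun h => hR.trans hpq h⟩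
  have hCK : ∀ p : Fin m, C p ∈ K := fun p => Finset.mem_image_of_mem _ (Finset.mem_univ p)
  have hfib : ∀ t ∈ K, ∀ p : Fin m, C p = t ↔ p ∈ t := by
    intro t ht p
    obtain ⟨p0, _, rfl⟩ := Finset.mem_image.1 ht
    constructor
    · intro h
      have : p ∈ C p := (hmemC p p).2 (hR.refl p)
      rwa [h] at this
    · intro hp
      exact (hCeq p0 p ((hmemC p0 p).1 hp)).symm
  set A : Finset (Fin m) → ℕ := fun t => (Finset.filter (fun q : Fin m => (q : ℕ) < c) t).card with hAdef
  set B : Finset (Fin m) → ℕ := fun t => (Finset.filter (fun q : Fin m => c ≤ (q : ℕ)) t).card with hBdef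
  have hAB : ∀ t : Finset (Fin m), A t + B t = t.card := by
    intro t
    have := Finset.card_filter_add_card_filter_not (s := t)
      (p := fun q : Fin m => (q : ℕ) < c)
    simp only [not_lt] at this
    simpa [hAdef, hBdef] using this
  have hcard_le : ∀ t ∈ K, t.card ≤ w := by
    intro t ht
    obtain ⟨p0, _, rfl⟩ := Finset.mem_image.1 ht
    exact hclass p0
  have hne : ∀ t ∈ K, 0 < t.card := by
    intro t ht
    obtain ⟨p0, _, rfl⟩ := Finset.mem_image.1 ht
    exact Finset.card_pos.2 ⟨p0, (hmemC p0 p0).2 (hR.refl p0)⟩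
  -- fiberwise decompositions
  have hfibset : ∀ (s : Finset (Fin m)), ∀ t ∈ K,
      s.filter (fun p => C p = t) = s ∩ t := by
    intro s t ht
    ext p
    simp only [Finset.mem_filter, Finset.mem_inter]
    exact and_congr_right fun _ => hfib t ht p
  have hsum_card : ∑ t ∈ K, t.card = m := by
    have h1 : (Finset.univ : Finset (Fin m)).card
        = ∑ t ∈ K, ((Finset.univ.filter (fun p => C p = t)).card) :=
      Finset.card_eq_sum_card_fiberwise (fun p _ => hCK p)
    rw [Finset.card_univ, Fintype.card_fin] at h1
    refine Eq.trans ?_ h1.symm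
    refine Finset.sum_congr rfl fun t ht => ?_
    rw [hfibset _ t ht, Finset.univ_inter]
  have hsum_A : ∑ t ∈ K, A t = c := by
    have h1 : (Finset.univ.filter (fun p : Fin m => (p : ℕ) < c)).card
        = ∑ t ∈ K, (((Finset.univ.filter (fun p : Fin m => (p : ℕ) < c)).filter
            (fun p => C p = t)).card) :=
      Finset.card_eq_sum_card_fiberwise (fun p _ => hCK p)
    have h2 : Finset.univ.filter (fun p : Fin m => (p : ℕ) < c)
        = Finset.Iio (⟨c, hcm⟩ : Fin m) := by
      ext p
      simp [Fin.lt_def]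
    have h3 : (Finset.univ.filter (fun p : Fin m => (p : ℕ) < c)).card = c := by
      rw [h2, Fin.card_Iio]
    rw [← h3, h1]
    refine Finset.sum_congr rfl fun t ht => ?_
    rw [hfibset _ t ht]
    have hset : (Finset.univ.filter (fun p : Fin m => (p : ℕ) < c)) ∩ t
        = Finset.filter (fun q : Fin m => (q : ℕ) < c) t := by
      ext p
      simp only [Finset.mem_inter, Finset.mem_filter, Finset.mem_univ, true_and]
      tauto
    rw [hset]
  have hsum_B : ∑ t ∈ K, B t = m - c := by
    have h1 : ∑ t ∈ K, (A t + B t) = m := by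
      rw [Finset.sum_congr rfl (fun t _ => hAB t), hsum_card]
    rw [Finset.sum_add_distrib, hsum_A] at h1
    omega
  set N : ℕ := ∑ t ∈ K, A t * B t with hNdef
  have hsum_N : (Finset.univ.filter (fun pq : Fin m × Fin m =>
      R pq.1 pq.2 ∧ (pq.1 : ℕ) < c ∧ c ≤ (pq.2 : ℕ))).card = N := by
    have h1 : (Finset.univ.filter (fun pq : Fin m × Fin m =>
        R pq.1 pq.2 ∧ (pq.1 : ℕ) < c ∧ c ≤ (pq.2 : ℕ))).card
        = ∑ t ∈ K, (((Finset.univ.filter (fun pq : Fin m × Fin m =>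
            R pq.1 pq.2 ∧ (pq.1 : ℕ) < c ∧ c ≤ (pq.2 : ℕ))).filter
              (fun pq => C pq.1 = t)).card) :=
      Finset.card_eq_sum_card_fiberwise (fun pq _ => hCK pq.1)
    rw [h1]
    refine Finset.sum_congr rfl fun t ht => ?_
    have h2 : (Finset.univ.filter (fun pq : Fin m × Fin m =>
        R pq.1 pq.2 ∧ (pq.1 : ℕ) < c ∧ c ≤ (pq.2 : ℕ))).filter (fun pq => C pq.1 = t)
        = (Finset.filter (fun q : Fin m => (q : ℕ) < c) t)
            ×ˢ (Finset.filter (fun q : Fin m => c ≤ (q : ℕ)) t) := by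
      ext ⟨p, q⟩
      simp only [Finset.mem_filter, Finset.mem_univ, Finset.mem_product, true_and]
      constructor
      · rintro ⟨⟨hr, hp, hq⟩, hct⟩
        have hpt : p ∈ t := (hfib t ht p).1 hct
        have hqt : q ∈ t := by rw [← hct]; exact (hmemC p q).2 hr
        exact ⟨⟨hpt, hp⟩, hqt, hq⟩
      · rintro ⟨⟨hpt, hp⟩, hqt, hq⟩
        have hct : C p = t := (hfib t ht p).2 hpt
        have hr : R p q := (hmemC p q).1 (by rw [hct]; exact hqt)
        exact ⟨⟨hr, hp, hq⟩, hct⟩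
    rw [h2, Finset.card_product]
  have heq' : m * N = w * c * (m - c) := by rw [← hsum_N]; exact heq
  set F : Finset (Fin m) × Finset (Fin m) → ℕ := fun tu =>
    tu.2.card * (A tu.1 * B tu.1) + tu.1.card * (A tu.2 * B tu.2) with hFdef
  set G : Finset (Fin m) × Finset (Fin m) → ℕ := fun tu =>
    w * (A tu.1 * B tu.2) + w * (A tu.2 * B tu.1) with hGdef
  have hptle : ∀ tu ∈ K ×ˢ K, F tu ≤ G tu := by
    rintro ⟨t, u⟩ htu
    rw [Finset.mem_product] at htu
    have h1 : A t + B t ≤ w := by rw [hAB]; exact hcard_le t htu.1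
    have h2 : A u + B u ≤ w := by rw [hAB]; exact hcard_le u htu.2
    have h3 := pair_ineq_nat w (A t) (B t) (A u) (B u) h1 h2
    simp only [hFdef, hGdef]
    rw [← hAB u, ← hAB t]
    exact h3
  have hFsum : ∑ tu ∈ K ×ˢ K, F tu = 2 * (m * N) := by
    rw [Finset.sum_product]
    have step : ∀ t ∈ K, ∑ u ∈ K, F (t, u) = m * (A t * B t) + t.card * N := by
      intro t _
      simp only [hFdef]
      rw [Finset.sum_add_distrib, ← Finset.sum_mul, ← Finset.mul_sum, hsum_card, ← hNdef]
    rw [Finset.sum_congr rfl step, Finset.sum_add_distrib, ← Finset.mul_sum,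
      ← Finset.sum_mul, hsum_card, ← hNdef]
    ring
  have hGsum : ∑ tu ∈ K ×ˢ K, G tu = 2 * (w * c * (m - c)) := by
    rw [Finset.sum_product]
    have step : ∀ t ∈ K, ∑ u ∈ K, G (t, u) = w * (A t * (m - c)) + w * ((∑ u ∈ K, A u * B t)) := by
      intro t _
      simp only [hGdef]
      rw [Finset.sum_add_distrib, ← Finset.mul_sum, ← Finset.mul_sum, ← Finset.mul_sum, hsum_B]
    rw [Finset.sum_congr rfl step]
    have step2 : ∑ t ∈ K, (w * (A t * (m - c)) + w * ((∑ u ∈ K, A u * B t)))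
        = w * ((∑ t ∈ K, A t) * (m - c)) + w * ((∑ t ∈ K, ∑ u ∈ K, A u * B t)) := by
      rw [Finset.sum_add_distrib, ← Finset.mul_sum, ← Finset.mul_sum, ← Finset.sum_mul]
    rw [step2, hsum_A]
    have step3 : ∑ t ∈ K, ∑ u ∈ K, A u * B t = c * (m - c) := by
      rw [Finset.sum_comm]
      have : ∀ u ∈ K, ∑ t ∈ K, A u * B t = A u * (m - c) := by
        intro u _
        rw [← Finset.mul_sum, hsum_B]
      rw [Finset.sum_congr rfl this, ← Finset.sum_mul, hsum_A]
    rw [step3]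
    ring
  have htotal : ∑ tu ∈ K ×ˢ K, F tu = ∑ tu ∈ K ×ˢ K, G tu := by
    rw [hFsum, hGsum, heq']
  have hpt : ∀ tu ∈ K ×ˢ K, F tu = G tu :=
    (Finset.sum_eq_sum_iff_of_le hptle).1 htotal
  -- find a class with positive product
  have hmc : 0 < m - c := by omega
  have hNpos : 0 < N := by
    rcases Nat.eq_zero_or_pos N with h | h
    · rw [h, Nat.mul_zero] at heq'
      have : 0 < w * c * (m - c) := by positivity
      omega
    · exact h
  obtain ⟨t0, ht0K, ht0⟩ : ∃ t ∈ K, 0 < A t * B t := by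
    by_contra h
    push_neg at h
    have : N = 0 := Finset.sum_eq_zero fun t ht => Nat.le_zero.1 (h t ht)
    omega
  have ha0 : 0 < A t0 := Nat.pos_of_ne_zero fun h => by simp [h] at ht0
  have hb0 : 0 < B t0 := Nat.pos_of_ne_zero fun h => by simp [h] at ht0
  have hd := hpt (t0, t0) (Finset.mem_product.2 ⟨ht0K, ht0K⟩)
  simp only [hFdef, hGdef] at hd
  have hcard_t0 : t0.card = w := by
    have h1 : t0.card * (A t0 * B t0) = w * (A t0 * B t0) := by omega
    exact Nat.eq_of_mul_eq_mul_right ht0 h1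
  have hab0 : A t0 + B t0 = w := by rw [hAB]; exact hcard_t0
  have hclasses : ∀ t ∈ K, A t = A t0 ∧ B t = B t0 ∧ t.card = w := by
    intro t ht
    have hcross := hpt (t0, t) (Finset.mem_product.2 ⟨ht0K, ht⟩)
    have hdiag := hpt (t, t) (Finset.mem_product.2 ⟨ht, ht⟩)
    simp only [hFdef, hGdef] at hcross hdiag
    have hstw : A t + B t ≤ w := by rw [hAB]; exact hcard_le t ht
    have hstpos : 0 < A t + B t := by rw [hAB]; exact hne t ht
    have hdiag' : (A t + B t) * (A t * B t) + (A t + B t) * (A t * B t)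
        = w * (A t * B t) + w * (A t * B t) := by rw [hAB]; exact hdiag
    have hcross' : (A t + B t) * (A t0 * B t0) + (A t0 + B t0) * (A t * B t)
        = w * (A t0 * B t) + w * (A t * B t0) := by
      rw [hAB, hAB]; exact hcross
    obtain ⟨hx, hy⟩ := pair_eqcase_nat w (A t0) (B t0) (A t) (B t) ha0 hb0 hab0
      hstw hstpos hdiag' hcross'
    refine ⟨hx, hy, ?_⟩
    rw [← hAB, hx, hy, hab0]
  have hall_card : ∀ t ∈ K, t.card = w := fun t ht => (hclasses t ht).2.2
  have hm_eq : m = K.card * w := by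
    have h2 : ∑ t ∈ K, t.card = ∑ _t ∈ K, w := Finset.sum_congr rfl hall_card
    rw [Finset.sum_const, smul_eq_mul] at h2
    exact hsum_card.symm.trans h2
  have hc_eq : c = K.card * A t0 := by
    have h2 : ∑ t ∈ K, A t = ∑ _t ∈ K, A t0 :=
      Finset.sum_congr rfl (fun t ht => (hclasses t ht).1)
    rw [Finset.sum_const, smul_eq_mul] at h2
    exact hsum_A.symm.trans h2
  refine ⟨⟨K.card, hm_eq.trans (Nat.mul_comm _ _)⟩, ?_, ?_, ?_⟩
  · show K.card = m / w
    exact (Nat.div_eq_of_eq_mul_left hw hm_eq).symm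
  · intro p
    have := hall_card (C p) (hCK p)
    simpa [hCdef] using this
  · intro p
    have hfilter : Finset.univ.filter (fun q : Fin m => R p q ∧ (q : ℕ) < c)
        = Finset.filter (fun q : Fin m => (q : ℕ) < c) (C p) := by
      ext q
      simp [hCdef, and_comm]
    rw [hfilter]
    show m * A (C p) = w * c
    rw [(hclasses (C p) (hCK p)).1]
    calc m * A t0 = K.card * w * A t0 := by rw [← hm_eq]
      _ = w * (K.card * A t0) := by ring
      _ = w * c := by rw [← hc_eq]
end

section
/- Let ~ and ≡ be two equivalence relations on {1,...,m} such that each ~-class has size at most w and ≡ has exactly l classes. Then the number of pairs (p,q) with 1 ≤ p < q ≤ m, p ~ q, and p ≢ q is at most (w/m) times the number of pairs (p,q) with 1 ≤ p < q ≤ m and p ≢ q. -/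
open Finset

private lemma scalar_ineq (w x y x' y' : ℕ) (h : x + y ≤ w) (h' : x' + y' ≤ w) :
    (x' + y') * (x * y) + (x + y) * (x' * y') ≤ w * (x * y') + w * (x' * y) := by
  rcases le_total x x' with hx | hx <;> rcases le_total y y' with hy | hy <;> zify at * <;>
    nlinarith [mul_nonneg (mul_nonneg (Int.ofNat_nonneg x) (Int.ofNat_nonneg y')) (sub_nonneg.2 h),
      mul_nonneg (mul_nonneg (Int.ofNat_nonneg x') (Int.ofNat_nonneg y)) (sub_nonneg.2 h),
      mul_nonneg (mul_nonneg (Int.ofNat_nonneg x) (Int.ofNat_nonneg y')) (sub_nonneg.2 h'),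
      mul_nonneg (mul_nonneg (Int.ofNat_nonneg x') (Int.ofNat_nonneg y)) (sub_nonneg.2 h'),
      mul_nonneg (mul_nonneg (Int.ofNat_nonneg x) (Int.ofNat_nonneg y)) (sub_nonneg.2 h'),
      mul_nonneg (mul_nonneg (Int.ofNat_nonneg x') (Int.ofNat_nonneg y')) (sub_nonneg.2 h),
      mul_nonneg (mul_nonneg (Int.ofNat_nonneg w) (sub_nonneg.2 hx)) (sub_nonneg.2 hy),
      mul_nonneg (mul_nonneg (Int.ofNat_nonneg x) (Int.ofNat_nonneg y')) (sub_nonneg.2 hy),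
      mul_nonneg (mul_nonneg (Int.ofNat_nonneg x') (Int.ofNat_nonneg y)) (sub_nonneg.2 hx),
      mul_nonneg (mul_nonneg (Int.ofNat_nonneg x) (Int.ofNat_nonneg y')) (sub_nonneg.2 hx),
      mul_nonneg (mul_nonneg (Int.ofNat_nonneg x') (Int.ofNat_nonneg y)) (sub_nonneg.2 hy)]

private lemma sum_mul_sum_le {ι : Type*} (s : Finset ι) (x y : ι → ℕ) (w : ℕ)
    (h : ∀ K ∈ s, x K + y K ≤ w) :
    (∑ K ∈ s, (x K + y K)) * (∑ K ∈ s, x K * y K)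
      ≤ w * ((∑ K ∈ s, x K) * (∑ K ∈ s, y K)) := by
  have main : ∑ K ∈ s, ∑ K' ∈ s,
        ((x K' + y K') * (x K * y K) + (x K + y K) * (x K' * y K'))
      ≤ ∑ K ∈ s, ∑ K' ∈ s, (w * (x K * y K') + w * (x K' * y K)) := by
    refine Finset.sum_le_sum fun K hK => Finset.sum_le_sum fun K' hK' => ?_
    exact scalar_ineq w (x K) (y K) (x K') (y K') (h K hK) (h K' hK')
  have e1 : ∑ K ∈ s, ∑ K' ∈ s, (x K' + y K') * (x K * y K)
      = (∑ K ∈ s, (x K + y K)) * (∑ K ∈ s, x K * y K) := by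
    rw [Finset.sum_mul_sum, Finset.sum_comm]
  have e2 : ∑ K ∈ s, ∑ K' ∈ s, (x K + y K) * (x K' * y K')
      = (∑ K ∈ s, (x K + y K)) * (∑ K ∈ s, x K * y K) := by
    rw [Finset.sum_mul_sum]
  have e3 : ∑ K ∈ s, ∑ K' ∈ s, w * (x K * y K')
      = w * ((∑ K ∈ s, x K) * (∑ K ∈ s, y K)) := by
    have h1 : ∀ K, ∑ K' ∈ s, w * (x K * y K') = w * (x K * ∑ K' ∈ s, y K') := by
      intro K; rw [← Finset.mul_sum, ← Finset.mul_sum]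
    simp only [h1]
    rw [← Finset.mul_sum, ← Finset.sum_mul]
  have e4 : ∑ K ∈ s, ∑ K' ∈ s, w * (x K' * y K)
      = w * ((∑ K ∈ s, x K) * (∑ K ∈ s, y K)) := by
    have h1 : ∀ K, ∑ K' ∈ s, w * (x K' * y K) = w * ((∑ K' ∈ s, x K') * y K) := by
      intro K; rw [← Finset.mul_sum, ← Finset.sum_mul]
    simp only [h1]
    have h2 : ∀ K, w * ((∑ K' ∈ s, x K') * y K) = w * (∑ K' ∈ s, x K') * y K := by
      intro K; ring
    simp only [h2]
    rw [← Finset.mul_sum]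
    ring
  simp only [Finset.sum_add_distrib] at main
  rw [e1, e2, e3, e4] at main
  omega

private lemma card_sym_pairs {m : ℕ} (P : Fin m → Fin m → Prop) [DecidableRel P]
    (hsymm : ∀ p q, P p q → P q p) (hirr : ∀ p, ¬ P p p) :
    (Finset.univ.filter fun pq : Fin m × Fin m => P pq.1 pq.2).card
      = 2 * (Finset.univ.filter fun pq : Fin m × Fin m => pq.1 < pq.2 ∧ P pq.1 pq.2).card := by
  classical
  have hsplit : (Finset.univ.filter fun pq : Fin m × Fin m => P pq.1 pq.2)
      = (Finset.univ.filter fun pq : Fin m × Fin m => pq.1 < pq.2 ∧ P pq.1 pq.2)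
        ∪ (Finset.univ.filter fun pq : Fin m × Fin m => pq.2 < pq.1 ∧ P pq.1 pq.2) := by
    ext pq
    simp only [Finset.mem_filter, Finset.mem_union, Finset.mem_univ, true_and]
    constructor
    · intro h
      rcases lt_trichotomy pq.1 pq.2 with h1 | h1 | h1
      · exact Or.inl ⟨h1, h⟩
      · exact absurd h (by rw [show pq.1 = pq.2 from h1]; exact hirr pq.2)
      · exact Or.inr ⟨h1, h⟩
    · rintro (⟨_, h⟩ | ⟨_, h⟩) <;> exact h
  have hdisj : Disjoint
      (Finset.univ.filter fun pq : Fin m × Fin m => pq.1 < pq.2 ∧ P pq.1 pq.2)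
      (Finset.univ.filter fun pq : Fin m × Fin m => pq.2 < pq.1 ∧ P pq.1 pq.2) := by
    rw [Finset.disjoint_left]
    intro pq h1 h2
    simp only [Finset.mem_filter] at h1 h2
    exact absurd h2.2.1 (not_lt.2 (le_of_lt h1.2.1))
  have hswap : (Finset.univ.filter fun pq : Fin m × Fin m => pq.2 < pq.1 ∧ P pq.1 pq.2).card
      = (Finset.univ.filter fun pq : Fin m × Fin m => pq.1 < pq.2 ∧ P pq.1 pq.2).card := by
    apply Finset.card_bij (fun pq _ => Prod.swap pq)
    · intro pq h
      simp only [Finset.mem_filter, Finset.mem_univ, true_and] at h ⊢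
      exact ⟨h.1, hsymm _ _ h.2⟩
    · intro a ha b hb hab
      exact Prod.swap_injective hab
    · intro pq h
      simp only [Finset.mem_filter, Finset.mem_univ, true_and] at h
      exact ⟨Prod.swap pq, by
        simp only [Finset.mem_filter, Finset.mem_univ, true_and, Prod.fst_swap, Prod.snd_swap]
        exact ⟨h.1, hsymm _ _ h.2⟩, by simp⟩
  rw [hsplit, Finset.card_union_of_disjoint hdisj, hswap]
  omega

/-- Lemma (eclasses2), inequality part: for equivalence relations `R` (classes of size
at most `w`) and `E` (with `l` classes) on `Fin m`, the number of pairs `p < q` with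
`R p q` and `¬ E p q` is at most `w/m` times the number of pairs `p < q` with `¬ E p q`. -/
theorem sum_orbits_eclasses2_bound (m w l : ℕ) (hm : 0 < m) (hw : 0 < w)
    (R E : Fin m → Fin m → Prop) [DecidableRel R] [DecidableRel E]
    (hR : Equivalence R) (hE : Equivalence E)
    (hclass : ∀ p : Fin m, (Finset.univ.filter (fun q => R p q)).card ≤ w)
    (hl : (Finset.univ.image (fun p : Fin m => Finset.univ.filter (fun q => E p q))).card = l) :
    m * (Finset.univ.filter (fun pq : Fin m × Fin m =>
          pq.1 < pq.2 ∧ R pq.1 pq.2 ∧ ¬ E pq.1 pq.2)).card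
      ≤ w * (Finset.univ.filter (fun pq : Fin m × Fin m =>
          pq.1 < pq.2 ∧ ¬ E pq.1 pq.2)).card := by
  classical
  -- ordered (unrestricted) versions
  set H2 : Finset (Fin m × Fin m) :=
    Finset.univ.filter (fun pq => R pq.1 pq.2 ∧ ¬ E pq.1 pq.2) with hH2def
  set N2 : Finset (Fin m × Fin m) :=
    Finset.univ.filter (fun pq => ¬ E pq.1 pq.2) with hN2def
  have hHd : H2.card = 2 * (Finset.univ.filter (fun pq : Fin m × Fin m =>
      pq.1 < pq.2 ∧ R pq.1 pq.2 ∧ ¬ E pq.1 pq.2)).card := by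
    rw [hH2def]
    exact card_sym_pairs (fun p q => R p q ∧ ¬ E p q)
      (fun p q h => ⟨hR.symm h.1, fun he => h.2 (hE.symm he)⟩)
      (fun p h => h.2 (hE.refl p))
  have hNd : N2.card = 2 * (Finset.univ.filter (fun pq : Fin m × Fin m =>
      pq.1 < pq.2 ∧ ¬ E pq.1 pq.2)).card := by
    rw [hN2def]
    exact card_sym_pairs (fun p q => ¬ E p q)
      (fun p q h he => h (hE.symm he)) (fun p h => h (hE.refl p))
  suffices hmain : m * H2.card ≤ w * N2.card by
    rw [hHd, hNd] at hmain
    have h2 : 2 * (m * (Finset.univ.filter (fun pq : Fin m × Fin m =>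
          pq.1 < pq.2 ∧ R pq.1 pq.2 ∧ ¬ E pq.1 pq.2)).card)
        ≤ 2 * (w * (Finset.univ.filter (fun pq : Fin m × Fin m =>
          pq.1 < pq.2 ∧ ¬ E pq.1 pq.2)).card) := by
      calc 2 * (m * (Finset.univ.filter (fun pq : Fin m × Fin m =>
            pq.1 < pq.2 ∧ R pq.1 pq.2 ∧ ¬ E pq.1 pq.2)).card)
          = m * (2 * (Finset.univ.filter (fun pq : Fin m × Fin m =>
            pq.1 < pq.2 ∧ R pq.1 pq.2 ∧ ¬ E pq.1 pq.2)).card) := by ring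
        _ ≤ w * (2 * (Finset.univ.filter (fun pq : Fin m × Fin m =>
            pq.1 < pq.2 ∧ ¬ E pq.1 pq.2)).card) := hmain
        _ = 2 * (w * (Finset.univ.filter (fun pq : Fin m × Fin m =>
            pq.1 < pq.2 ∧ ¬ E pq.1 pq.2)).card) := by ring
    omega
  -- class maps
  set eC : Fin m → Finset (Fin m) := fun p => Finset.univ.filter (fun q => E p q) with heCdef
  set rC : Fin m → Finset (Fin m) := fun p => Finset.univ.filter (fun q => R p q) with hrCdef
  have eC_mem : ∀ p q, q ∈ eC p ↔ E p q := by
    intro p q; simp [heCdef]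
  have rC_mem : ∀ p q, q ∈ rC p ↔ R p q := by
    intro p q; simp [hrCdef]
  have eC_eq : ∀ p q, E p q → eC p = eC q := by
    intro p q h
    ext r
    rw [eC_mem, eC_mem]
    exact ⟨fun hpr => hE.trans (hE.symm h) hpr, fun hqr => hE.trans h hqr⟩
  have rC_eq : ∀ p q, R p q → rC p = rC q := by
    intro p q h
    ext r
    rw [rC_mem, rC_mem]
    exact ⟨fun hpr => hR.trans (hR.symm h) hpr, fun hqr => hR.trans h hqr⟩
  set T : Finset (Finset (Fin m)) := Finset.univ.image eC with hTdef
  set U : Finset (Finset (Fin m)) := Finset.univ.image rC with hUdef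
  -- membership in the class vs class-map equality
  have eC_fiber : ∀ C ∈ T, ∀ p, eC p = C ↔ p ∈ C := by
    rintro C hC p
    obtain ⟨a, -, rfl⟩ := Finset.mem_image.1 hC
    constructor
    · intro h
      rw [← h]
      exact (eC_mem p p).2 (hE.refl p)
    · intro h
      exact (eC_eq a p ((eC_mem a p).1 h)).symm
  have rC_fiber : ∀ K ∈ U, ∀ p, rC p = K ↔ p ∈ K := by
    rintro K hK p
    obtain ⟨a, -, rfl⟩ := Finset.mem_image.1 hK
    constructor
    · intro h
      rw [← h]
      exact (rC_mem p p).2 (hR.refl p)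
    · intro h
      exact (rC_eq a p ((rC_mem a p).1 h)).symm
  -- fiberwise decomposition of H2 and N2 over E-classes
  have hH2card : H2.card = ∑ C ∈ T, (H2.filter (fun pq => eC pq.1 = C)).card := by
    apply Finset.card_eq_sum_card_fiberwise
    intro pq _
    exact Finset.mem_image.2 ⟨pq.1, Finset.mem_univ _, rfl⟩
  have hN2card : N2.card = ∑ C ∈ T, (N2.filter (fun pq => eC pq.1 = C)).card := by
    apply Finset.card_eq_sum_card_fiberwise
    intro pq _
    exact Finset.mem_image.2 ⟨pq.1, Finset.mem_univ _, rfl⟩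
  -- the per-E-class inequality
  have key : ∀ C ∈ T, m * (H2.filter (fun pq => eC pq.1 = C)).card
      ≤ w * (N2.filter (fun pq => eC pq.1 = C)).card := by
    intro C hC
    -- N2 fiber is a product
    have hNfib : N2.filter (fun pq => eC pq.1 = C) = C ×ˢ Cᶜ := by
      ext pq
      simp only [hN2def, Finset.mem_filter, Finset.mem_product, Finset.mem_univ, true_and,
        Finset.mem_compl]
      constructor
      · rintro ⟨hne, hfib⟩
        refine ⟨(eC_fiber C hC pq.1).1 hfib, fun hq => hne ?_⟩
        rw [← hfib] at hq
        exact (eC_mem pq.1 pq.2).1 hq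
      · rintro ⟨hp, hq⟩
        have hfib := (eC_fiber C hC pq.1).2 hp
        refine ⟨fun he => hq ?_, hfib⟩
        rw [← hfib]
        exact (eC_mem pq.1 pq.2).2 he
    have hNfibcard : (N2.filter (fun pq => eC pq.1 = C)).card = C.card * (m - C.card) := by
      rw [hNfib, Finset.card_product, Finset.card_compl, Fintype.card_fin]
    -- decompose the H2 fiber over R-classes
    set x : Finset (Fin m) → ℕ := fun K => (K.filter (fun p => p ∈ C)).card with hxdef
    set y : Finset (Fin m) → ℕ := fun K => (K.filter (fun p => p ∉ C)).card with hydef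
    have hxval : ∀ K, x K = (K.filter (fun p => p ∈ C)).card := fun K => rfl
    have hyval : ∀ K, y K = (K.filter (fun p => p ∉ C)).card := fun K => rfl
    have hHfibcard : (H2.filter (fun pq => eC pq.1 = C)).card = ∑ K ∈ U, x K * y K := by
      rw [Finset.card_eq_sum_card_fiberwise
        (f := fun pq => rC pq.1) (t := U)
        (fun pq _ => Finset.mem_image.2 ⟨pq.1, Finset.mem_univ _, rfl⟩)]
      refine Finset.sum_congr rfl fun K hK => ?_
      have hset : (H2.filter (fun pq => eC pq.1 = C)).filter (fun pq => rC pq.1 = K)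
          = (K.filter (fun p => p ∈ C)) ×ˢ (K.filter (fun p => p ∉ C)) := by
        ext pq
        simp only [hH2def, Finset.mem_filter, Finset.mem_product, Finset.mem_univ, true_and]
        constructor
        · rintro ⟨⟨⟨hr, hne⟩, hec⟩, hrc⟩
          have hp1K : pq.1 ∈ K := (rC_fiber K hK pq.1).1 hrc
          have hp2K : pq.2 ∈ K := by
            rw [← hrc]
            exact (rC_mem pq.1 pq.2).2 hr
          refine ⟨⟨hp1K, (eC_fiber C hC pq.1).1 hec⟩, hp2K, fun hq => hne ?_⟩
          rw [← hec] at hq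
          exact (eC_mem pq.1 pq.2).1 hq
        · rintro ⟨⟨h1K, h1C⟩, h2K, h2C⟩
          have hrc : rC pq.1 = K := (rC_fiber K hK pq.1).2 h1K
          have hec : eC pq.1 = C := (eC_fiber C hC pq.1).2 h1C
          refine ⟨⟨⟨?_, fun he => h2C ?_⟩, hec⟩, hrc⟩
          · exact (rC_mem pq.1 pq.2).1 (by rw [hrc]; exact h2K)
          · rw [← hec]
            exact (eC_mem pq.1 pq.2).2 he
      rw [hset, Finset.card_product, hxval, hyval]
    -- sums of x and y over R-classes
    have hsumx : ∑ K ∈ U, x K = C.card := by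
      have hfib : C.card = ∑ K ∈ U, (C.filter (fun p => rC p = K)).card :=
        Finset.card_eq_sum_card_fiberwise
          (fun p _ => Finset.mem_image.2 ⟨p, Finset.mem_univ _, rfl⟩)
      rw [hfib]
      refine Finset.sum_congr rfl fun K hK => ?_
      rw [hxval]
      refine congrArg Finset.card ?_
      ext p
      simp only [Finset.mem_filter]
      exact ⟨fun h => ⟨h.2, (rC_fiber K hK p).2 h.1⟩,
        fun h => ⟨(rC_fiber K hK p).1 h.2, h.1⟩⟩
    have hsumy : ∑ K ∈ U, y K = m - C.card := by
      have hfib : (Cᶜ : Finset (Fin m)).card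
          = ∑ K ∈ U, (Cᶜ.filter (fun p => rC p = K)).card :=
        Finset.card_eq_sum_card_fiberwise
          (fun p _ => Finset.mem_image.2 ⟨p, Finset.mem_univ _, rfl⟩)
      have hcc : (Cᶜ : Finset (Fin m)).card = m - C.card := by
        rw [Finset.card_compl, Fintype.card_fin]
      rw [← hcc, hfib]
      refine Finset.sum_congr rfl fun K hK => ?_
      rw [hyval]
      refine congrArg Finset.card ?_
      ext p
      simp only [Finset.mem_filter, Finset.mem_compl]
      exact ⟨fun h => ⟨h.2, (rC_fiber K hK p).2 h.1⟩,
        fun h => ⟨(rC_fiber K hK p).1 h.2, h.1⟩⟩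
    have hxy : ∀ K, x K + y K = K.card := by
      intro K
      rw [hxval, hyval]
      exact Finset.card_filter_add_card_filter_not (fun p => p ∈ C)
    have hsumxy : ∑ K ∈ U, (x K + y K) = m := by
      have huniv : (Finset.univ : Finset (Fin m)).card
          = ∑ K ∈ U, ((Finset.univ : Finset (Fin m)).filter (fun p => rC p = K)).card :=
        Finset.card_eq_sum_card_fiberwise
          (fun p _ => Finset.mem_image.2 ⟨p, Finset.mem_univ _, rfl⟩)
      rw [Finset.card_univ, Fintype.card_fin] at huniv
      conv_rhs => rw [huniv]
      refine Finset.sum_congr rfl fun K hK => ?_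
      rw [hxy]
      refine congrArg Finset.card ?_
      ext p
      simp only [Finset.mem_filter, Finset.mem_univ, true_and]
      exact (rC_fiber K hK p).symm
    have hxyw : ∀ K ∈ U, x K + y K ≤ w := by
      intro K hK
      rw [hxy]
      obtain ⟨a, -, rfl⟩ := Finset.mem_image.1 hK
      exact hclass a
    have := sum_mul_sum_le U x y w hxyw
    rw [hsumx, hsumy, hsumxy, ← hHfibcard] at this
    rw [hNfibcard]
    calc m * (H2.filter (fun pq => eC pq.1 = C)).card ≤ w * (C.card * (m - C.card)) := this
      _ = w * (C.card * (m - C.card)) := rfl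
  calc m * H2.card = ∑ C ∈ T, m * (H2.filter (fun pq => eC pq.1 = C)).card := by
        rw [hH2card, Finset.mul_sum]
    _ ≤ ∑ C ∈ T, w * (N2.filter (fun pq => eC pq.1 = C)).card :=
        Finset.sum_le_sum key
    _ = w * N2.card := by rw [hN2card, Finset.mul_sum]
end

section
/- Let X ∈ su(m) be a skew-Hermitian traceless matrix with largest eigenvalue multiplicity w, and let Ψ be the annihilator in A_{m-1} of a vector with exactly two distinct values, taken with multiplicities c and m−c. Then |Φ_X ∩ N_Ψ| ≤ (w/m)|N_Ψ|, where N_Ψ = Φ \ Ψ. Combinatorially: if ~ is an equivalence relation on {1,...,m} with classes of size at most w, then the number of ordered pairs (p,q), p ≠ q, with p ~ q and exactly one of p,q lying in {1,...,c} is at most (w/m)·2c(m−c). -/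
private lemma class_sum_eq {m : ℕ} (R : Fin m → Fin m → Prop) [DecidableRel R]
    (hR : Equivalence R) (σ : Fin m → Prop) [DecidablePred σ]
    (F : Finset (Fin m) → ℕ) :
    ∑ p ∈ Finset.univ.filter σ, F (Finset.univ.filter (R p)) =
      ∑ K ∈ Finset.univ.image (fun p : Fin m => Finset.univ.filter (R p)),
        (K.filter σ).card * F K := by
  classical
  have hphi_eq : ∀ p q : Fin m, R p q →
      Finset.univ.filter (R p) = Finset.univ.filter (R q) := by
    intro p q h
    ext r
    simp only [Finset.mem_filter, Finset.mem_univ, true_and]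
    exact ⟨fun hpr => hR.trans (hR.symm h) hpr, fun hqr => hR.trans h hqr⟩
  have key : ∀ K ∈ Finset.univ.image (fun p : Fin m => Finset.univ.filter (R p)),
      (Finset.univ.filter σ).filter
        (fun p => Finset.univ.filter (R p) = K) = K.filter σ := by
    intro K hK
    obtain ⟨p₀, -, rfl⟩ := Finset.mem_image.mp hK
    ext p
    simp only [Finset.mem_filter, Finset.mem_univ, true_and]
    constructor
    · rintro ⟨hσ, hEq⟩
      refine ⟨?_, hσ⟩
      have hp : p ∈ Finset.univ.filter (R p) := by
        simp [hR.refl p]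
      rw [hEq] at hp
      simpa using hp
    · rintro ⟨hr, hσ⟩
      exact ⟨hσ, (hphi_eq p₀ p hr).symm⟩
  have fib := Finset.sum_fiberwise_of_maps_to
      (s := Finset.univ.filter σ)
      (t := Finset.univ.image (fun p : Fin m => Finset.univ.filter (R p)))
      (g := fun p : Fin m => Finset.univ.filter (R p))
      (fun p _ => Finset.mem_image_of_mem (fun p : Fin m => Finset.univ.filter (R p))
        (Finset.mem_univ p))
      (fun p => F (Finset.univ.filter (R p)))
  rw [← fib]
  refine Finset.sum_congr rfl (fun K hK => ?_)
  rw [show (∑ p ∈ (Finset.univ.filter σ).filter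
        (fun p => Finset.univ.filter (R p) = K), F (Finset.univ.filter (R p)))
      = ∑ p ∈ (Finset.univ.filter σ).filter
        (fun p => Finset.univ.filter (R p) = K), F K from
    Finset.sum_congr rfl (fun p hp => by rw [(Finset.mem_filter.mp hp).2])]
  rw [Finset.sum_const, key K hK, smul_eq_mul]

/-- Combinatorial form of `|Φ_X ∩ N_Ψ| ≤ (w/m)|N_Ψ|` for `su(m)`: if `R` is an
equivalence relation on `Fin m` with all classes of size at most `w`, and
`N_Ψ` consists of ordered pairs `(p,q)`, `p ≠ q`, with exactly one of `p, q` among the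
first `c` indices (so `|N_Ψ| = 2c(m−c)`), then
`m · |{(p,q) ∈ N_Ψ : R p q}| ≤ w · 2c(m−c)`. -/
theorem su_annihilator_cut_bound (m w c : ℕ) (hm : 0 < m) (hw : 0 < w)
    (hc1 : 1 ≤ c) (hc2 : c ≤ m - 1)
    (R : Fin m → Fin m → Prop) [DecidableRel R] (hR : Equivalence R)
    (hclass : ∀ p : Fin m, (Finset.univ.filter (fun q => R p q)).card ≤ w) :
    m * (Finset.univ.filter (fun pq : Fin m × Fin m =>
        pq.1 ≠ pq.2 ∧ R pq.1 pq.2 ∧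
          ¬ (((pq.1 : ℕ) < c) ↔ ((pq.2 : ℕ) < c)))).card
      ≤ w * (2 * c * (m - c)) := by
  classical
  set d : ℕ := m - c with hd
  have hcm : c < m := lt_of_le_of_lt hc2 (Nat.sub_lt hm one_pos)
  have hmcd : m = c + d := by omega
  set C : Finset (Finset (Fin m)) :=
    Finset.univ.image (fun p : Fin m => Finset.univ.filter (R p)) with hC
  set aOf : Finset (Fin m) → ℕ :=
    fun K => (K.filter (fun q : Fin m => (q : ℕ) < c)).card with haOf
  set bOf : Finset (Fin m) → ℕ :=
    fun K => (K.filter (fun q : Fin m => ¬ (q : ℕ) < c)).card with hbOf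
  set Qa : ℕ := ∑ K ∈ C, aOf K * aOf K with hQa
  set Qb : ℕ := ∑ K ∈ C, bOf K * bOf K with hQb
  set P : ℕ := ∑ K ∈ C, aOf K * bOf K with hP
  set L : Finset (Fin m) := Finset.univ.filter (fun p : Fin m => (p : ℕ) < c) with hL
  set Rt : Finset (Fin m) := Finset.univ.filter (fun p : Fin m => ¬ (p : ℕ) < c) with hRt
  -- cardinalities of the two sides
  have hLcard : L.card = c := by
    rw [hL, Finset.card_filter, Fin.sum_univ_eq_sum_range (fun i => if i < c then 1 else 0),
      ← Finset.card_filter]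
    have h1 : (Finset.range m).filter (fun i => i < c) = Finset.range c := by
      ext i; simp; omega
    rw [h1, Finset.card_range]
  have hRtcard : Rt.card = d := by
    have h2 := Finset.card_filter_add_card_filter_not
      (s := (Finset.univ : Finset (Fin m))) (p := fun p : Fin m => (p : ℕ) < c)
    rw [← hL, ← hRt] at h2
    simp only [Finset.card_univ, Fintype.card_fin] at h2
    omega
  -- per-point class split
  have hαβ : ∀ p : Fin m,
      aOf (Finset.univ.filter (R p)) + bOf (Finset.univ.filter (R p))
        = (Finset.univ.filter (R p)).card := by
    intro p
    exact Finset.card_filter_add_card_filter_not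
      (s := Finset.univ.filter (R p)) (p := fun q : Fin m => (q : ℕ) < c)
  -- class sums
  have hQa' : ∑ p ∈ L, aOf (Finset.univ.filter (R p)) = Qa := by
    rw [hQa, hL, class_sum_eq R hR (fun p : Fin m => (p : ℕ) < c) aOf]
  have hP1 : ∑ p ∈ L, bOf (Finset.univ.filter (R p)) = P := by
    rw [hP, hL, class_sum_eq R hR (fun p : Fin m => (p : ℕ) < c) bOf]
  have hQb' : ∑ p ∈ Rt, bOf (Finset.univ.filter (R p)) = Qb := by
    rw [hQb, hRt, class_sum_eq R hR (fun p : Fin m => ¬ (p : ℕ) < c) bOf]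
  have hP2 : ∑ p ∈ Rt, aOf (Finset.univ.filter (R p)) = P := by
    rw [hP, hRt, class_sum_eq R hR (fun p : Fin m => ¬ (p : ℕ) < c) aOf]
    exact Finset.sum_congr rfl (fun K _ => mul_comm _ _)
  -- the count equals 2 * P
  have hcount : (Finset.univ.filter (fun pq : Fin m × Fin m =>
        pq.1 ≠ pq.2 ∧ R pq.1 pq.2 ∧
          ¬ (((pq.1 : ℕ) < c) ↔ ((pq.2 : ℕ) < c)))).card = 2 * P := by
    rw [Finset.card_filter, Fintype.sum_prod_type]
    have hsum : ∀ p : Fin m,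
        (∑ q : Fin m, if p ≠ q ∧ R p q ∧ ¬ (((p : ℕ) < c) ↔ ((q : ℕ) < c)) then 1 else 0)
          = if (p : ℕ) < c then bOf (Finset.univ.filter (R p))
            else aOf (Finset.univ.filter (R p)) := by
      intro p
      by_cases hp : (p : ℕ) < c
      · rw [if_pos hp]
        simp only [hbOf]
        rw [Finset.filter_filter, ← Finset.card_filter]
        congr 1
        apply Finset.filter_congr
        intro q _
        constructor
        · rintro ⟨hne, hr, hiff⟩
          exact ⟨hr, fun hq => hiff ⟨fun _ => hq, fun _ => hp⟩⟩
        · rintro ⟨hr, hq⟩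
          exact ⟨fun h => hq (h ▸ hp), hr, fun hiff => hq (hiff.mp hp)⟩
      · rw [if_neg hp]
        simp only [haOf]
        rw [Finset.filter_filter, ← Finset.card_filter]
        congr 1
        apply Finset.filter_congr
        intro q _
        constructor
        · rintro ⟨hne, hr, hiff⟩
          by_cases hq : (q : ℕ) < c
          · exact ⟨hr, hq⟩
          · exact absurd ⟨fun h => absurd h hp, fun h => absurd h hq⟩ hiff
        · rintro ⟨hr, hq⟩
          exact ⟨fun h => hp (h ▸ hq), hr, fun hiff => hp (hiff.mpr hq)⟩
    rw [Finset.sum_congr rfl (fun p _ => hsum p), Finset.sum_ite]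
    rw [← hL, ← hRt]
    rw [hP1, hP2]
    omega
  rw [hcount]
  -- key inequalities
  have h1 : Qa + P ≤ w * c := by
    calc Qa + P = ∑ p ∈ L, (aOf (Finset.univ.filter (R p)) + bOf (Finset.univ.filter (R p))) := by
          rw [Finset.sum_add_distrib, hQa', hP1]
      _ = ∑ p ∈ L, (Finset.univ.filter (R p)).card :=
          Finset.sum_congr rfl (fun p _ => hαβ p)
      _ ≤ ∑ _p ∈ L, w := Finset.sum_le_sum (fun p _ => hclass p)
      _ = w * c := by rw [Finset.sum_const, hLcard, smul_eq_mul, mul_comm]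
  have h2 : P + Qb ≤ w * d := by
    calc P + Qb = ∑ p ∈ Rt, (aOf (Finset.univ.filter (R p)) + bOf (Finset.univ.filter (R p))) := by
          rw [Finset.sum_add_distrib, hQb', hP2]
      _ = ∑ p ∈ Rt, (Finset.univ.filter (R p)).card :=
          Finset.sum_congr rfl (fun p _ => hαβ p)
      _ ≤ ∑ _p ∈ Rt, w := Finset.sum_le_sum (fun p _ => hclass p)
      _ = w * d := by rw [Finset.sum_const, hRtcard, smul_eq_mul, mul_comm]
  have hCS : P * P ≤ Qa * Qb := by
    have h3 := Finset.sum_mul_sq_le_sq_mul_sq C aOf bOf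
    simp only [pow_two] at h3
    rw [hQa, hQb, hP]
    exact h3
  -- final arithmetic
  rcases le_or_gt (c * P) (d * Qa) with hcase | hcase
  · calc m * (2 * P) = 2 * (c * P) + 2 * (d * P) := by rw [hmcd]; ring
      _ ≤ 2 * (d * Qa) + 2 * (d * P) := by
          exact Nat.add_le_add_right (Nat.mul_le_mul le_rfl hcase) _
      _ = 2 * d * (Qa + P) := by ring
      _ ≤ 2 * d * (w * c) := Nat.mul_le_mul le_rfl h1
      _ = w * (2 * c * d) := by ring
  · have hPpos : 0 < P := by
      rcases Nat.eq_zero_or_pos P with h0 | h0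
      · exfalso; rw [h0] at hcase; omega
      · exact h0
    have hdP : d * P ≤ c * Qb := by
      have h3 : P * (d * P) ≤ P * (c * Qb) := by
        calc P * (d * P) = d * (P * P) := by ring
          _ ≤ d * (Qa * Qb) := Nat.mul_le_mul le_rfl hCS
          _ = (d * Qa) * Qb := by ring
          _ ≤ (c * P) * Qb := Nat.mul_le_mul hcase.le le_rfl
          _ = P * (c * Qb) := by ring
      exact Nat.le_of_mul_le_mul_left h3 hPpos
    calc m * (2 * P) = 2 * (c * P) + 2 * (d * P) := by rw [hmcd]; ring
      _ ≤ 2 * (c * P) + 2 * (c * Qb) := by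
          exact Nat.add_le_add_left (Nat.mul_le_mul le_rfl hdP) _
      _ = 2 * c * (P + Qb) := by ring
      _ ≤ 2 * c * (w * d) := Nat.mul_le_mul le_rfl h2
      _ = w * (2 * c * d) := by ring
end

section
/- (L2 count for su(m)) Let k ≥ 2 and let ~_1,...,~_k be equivalence relations on {1,...,m} with largest class sizes q_1,...,q_k. Suppose Σ q_i ≤ (k−1)m − 1. Then for every equivalence relation ≡ on {1,...,m} with t ≥ 2 classes, letting N = {(p,q) : p ≠ q, p ≢ q} and H_i = {(p,q) ∈ N : p ~_i q}, we have Σ_{i=1}^k |H_i| ≤ (k−1)|N| − (t−1). -/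
open Finset

variable {m : ℕ}

def cls (F : Fin m → Fin m → Prop) [DecidableRel F] (p : Fin m) : Finset (Fin m) :=
  univ.filter (fun x => F p x)

@[simp] lemma mem_cls {F : Fin m → Fin m → Prop} [DecidableRel F] {p x : Fin m} :
    x ∈ cls F p ↔ F p x := by simp [cls]

lemma cls_eq_of {F : Fin m → Fin m → Prop} [DecidableRel F] (hF : Equivalence F)
    {p x : Fin m} (h : F p x) : cls F x = cls F p := by
  ext y; simp only [mem_cls]
  exact ⟨fun hxy => hF.trans h hxy, fun hpy => hF.trans (hF.symm h) hpy⟩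

lemma mem_of_mem_image_cls {F : Fin m → Fin m → Prop} [DecidableRel F] (hF : Equivalence F)
    {D : Finset (Fin m)} (hD : D ∈ univ.image (cls F)) {p : Fin m} (hp : p ∈ D) :
    cls F p = D := by
  obtain ⟨p₀, -, rfl⟩ := mem_image.1 hD
  exact cls_eq_of hF (mem_cls.1 hp)

-- fiber of the pair map equals intersection
lemma pair_fiber {R E : Fin m → Fin m → Prop} [DecidableRel R] [DecidableRel E]
    (hR : Equivalence R) (hE : Equivalence E) (p₀ : Fin m) :
    univ.filter (fun p => (cls R p, cls E p) = (cls R p₀, cls E p₀))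
      = cls R p₀ ∩ cls E p₀ := by
  ext p
  simp only [mem_filter, mem_univ, true_and, mem_inter, Prod.mk.injEq, mem_cls]
  constructor
  · rintro ⟨h1, h2⟩
    constructor
    · have : p ∈ cls R p := mem_cls.2 (hR.refl p); rw [h1] at this; exact mem_cls.1 this
    · have : p ∈ cls E p := mem_cls.2 (hE.refl p); rw [h2] at this; exact mem_cls.1 this
  · rintro ⟨h1, h2⟩
    exact ⟨cls_eq_of hR h1, cls_eq_of hE h2⟩

-- grouping a sum over points by the pair of classes
lemma sum_group_pair {R E : Fin m → Fin m → Prop} [DecidableRel R] [DecidableRel E]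
    (hR : Equivalence R) (hE : Equivalence E) (f : Finset (Fin m) → Finset (Fin m) → ℕ) :
    ∑ p : Fin m, f (cls R p) (cls E p)
      = ∑ z ∈ univ.image (fun p => (cls R p, cls E p)),
          (z.1 ∩ z.2).card * f z.1 z.2 := by
  rw [← Finset.sum_fiberwise_of_maps_to (g := fun p => (cls R p, cls E p))
    (fun x _ => mem_image_of_mem _ (mem_univ x))]
  refine sum_congr rfl fun z hz => ?_
  have h1 : ∑ p ∈ univ.filter (fun p => (cls R p, cls E p) = z), f (cls R p) (cls E p)
      = ∑ p ∈ univ.filter (fun p => (cls R p, cls E p) = z), f z.1 z.2 := by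
    refine sum_congr rfl fun p hp => ?_
    have := (mem_filter.1 hp).2
    rw [Prod.mk.injEq] at this
    rw [this.1, this.2]
  rw [h1, sum_const, smul_eq_mul]
  obtain ⟨p₀, -, rfl⟩ := mem_image.1 hz
  rw [pair_fiber hR hE p₀]

lemma cls_fiber {F : Fin m → Fin m → Prop} [DecidableRel F] (hF : Equivalence F)
    (s : Finset (Fin m)) {D : Finset (Fin m)} (hD : D ∈ univ.image (cls F)) :
    s.filter (fun p => cls F p = D) = s ∩ D := by
  ext p
  simp only [mem_filter, mem_inter]
  refine and_congr_right fun hp => ⟨fun h => ?_, fun h => mem_of_mem_image_cls hF hD h⟩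
  · rw [← h]; exact mem_cls.2 (hF.refl p)

lemma sum_group {F : Fin m → Fin m → Prop} [DecidableRel F] (hF : Equivalence F)
    (f : Finset (Fin m) → ℕ) :
    ∑ p : Fin m, f (cls F p) = ∑ C ∈ univ.image (cls F), C.card * f C := by
  rw [← Finset.sum_fiberwise_of_maps_to (g := cls F)
    (fun x _ => mem_image_of_mem _ (mem_univ x))]
  refine sum_congr rfl fun C hC => ?_
  have h1 : ∑ p ∈ univ.filter (fun p => cls F p = C), f (cls F p)
      = ∑ p ∈ univ.filter (fun p => cls F p = C), f C := by
    refine sum_congr rfl fun p hp => ?_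
    rw [(mem_filter.1 hp).2]
  rw [h1, sum_const, smul_eq_mul, cls_fiber hF univ hC, univ_inter]

lemma sum_inter_card {F : Fin m → Fin m → Prop} [DecidableRel F] (hF : Equivalence F)
    (s : Finset (Fin m)) :
    ∑ D ∈ univ.image (cls F), (s ∩ D).card = s.card := by
  rw [card_eq_sum_ones s, ← Finset.sum_fiberwise_of_maps_to (g := cls F) (f := fun _ => 1)
    (fun x _ => mem_image_of_mem _ (mem_univ x))]
  refine sum_congr rfl fun D hD => ?_
  rw [← card_eq_sum_ones, cls_fiber hF s hD]

lemma ptwise (q a b a' b' : ℕ) (h : a + b ≤ q) (h' : a' + b' ≤ q) :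
    (a'+b')*(a*b) + (a+b)*(a'*b') ≤ q*(a*b') + q*(a'*b) := by
  zify at h h' ⊢
  have ha : (0:ℤ) ≤ a := Int.ofNat_nonneg a
  have hb : (0:ℤ) ≤ b := Int.ofNat_nonneg b
  have ha' : (0:ℤ) ≤ a' := Int.ofNat_nonneg a'
  have hb' : (0:ℤ) ≤ b' := Int.ofNat_nonneg b'
  set A := (a:ℤ); set B := (b:ℤ); set A' := (a':ℤ); set B' := (b':ℤ); set Q := (q:ℤ)
  have h5 : 0 ≤ (Q - (A+B)) * (A*B' + A'*B) :=
    mul_nonneg (by linarith) (by positivity)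
  have h6 : 0 ≤ (Q - (A'+B')) * (A*B' + A'*B) :=
    mul_nonneg (by linarith) (by positivity)
  rcases le_total A A' with h1 | h1 <;> rcases le_total B B' with h2 | h2
  · nlinarith [h6, mul_nonneg (mul_nonneg ha' hb) (sub_nonneg.2 h1),
      mul_nonneg (mul_nonneg ha hb') (sub_nonneg.2 h2)]
  · have hab : A * B' ≤ A' * B := mul_le_mul h1 h2 hb' ha'
    rcases le_total (A + B) (A' + B') with h3 | h3
    · nlinarith [h6, mul_nonneg (mul_nonneg ha hb') (sub_nonneg.2 h2),
        mul_nonneg (sub_nonneg.2 hab) (sub_nonneg.2 h1)]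
    · nlinarith [h5, mul_nonneg (mul_nonneg ha' hb) (sub_nonneg.2 h2),
        mul_nonneg (sub_nonneg.2 hab) (sub_nonneg.2 h1),
        mul_nonneg (mul_nonneg ha' hb) (by linarith : (0:ℤ) ≤ (B - B') - (A' - A))]
  · have hab : A' * B ≤ A * B' := mul_le_mul h1 h2 hb ha
    rcases le_total (A + B) (A' + B') with h3 | h3
    · nlinarith [h6, mul_nonneg (mul_nonneg ha hb') (sub_nonneg.2 h2),
        mul_nonneg (sub_nonneg.2 hab) (sub_nonneg.2 h1)]
    · nlinarith [h5, mul_nonneg (mul_nonneg ha' hb) (sub_nonneg.2 h2),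
        mul_nonneg (sub_nonneg.2 hab) (sub_nonneg.2 h1),
        mul_nonneg (mul_nonneg ha hb') (by linarith : (0:ℤ) ≤ (A - A') - (B' - B))]
  · nlinarith [h5, mul_nonneg (mul_nonneg ha hb') (sub_nonneg.2 h1),
      mul_nonneg (mul_nonneg ha' hb) (sub_nonneg.2 h2)]

lemma N_eq {E : Fin m → Fin m → Prop} [DecidableRel E] (hE : Equivalence E) :
    (univ.filter (fun pq : Fin m × Fin m => ¬ E pq.1 pq.2)).card
      = ∑ C ∈ univ.image (cls E), C.card * (univ \ C).card := by
  have e1 : (univ.filter (fun pq : Fin m × Fin m => ¬ E pq.1 pq.2)).card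
      = ∑ p : Fin m, (univ \ cls E p).card := by
    rw [card_filter, Fintype.sum_prod_type]
    refine sum_congr rfl fun p _ => ?_
    rw [show (univ \ cls E p) = univ.filter (fun x => ¬ E p x) by ext x; simp [cls],
      card_filter]
  rw [e1, sum_group hE (fun C => (univ \ C).card)]

lemma key (q : ℕ) (R E : Fin m → Fin m → Prop) [DecidableRel R] [DecidableRel E]
    (hR : Equivalence R) (hE : Equivalence E)
    (hq : ∀ p, (univ.filter (fun x => R p x)).card ≤ q) :
    m * (univ.filter (fun pq : Fin m × Fin m => R pq.1 pq.2 ∧ ¬ E pq.1 pq.2)).card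
      ≤ q * (univ.filter (fun pq : Fin m × Fin m => ¬ E pq.1 pq.2)).card := by
  classical
  set 𝒟 := univ.image (cls R) with h𝒟
  set 𝒞 := univ.image (cls E) with h𝒞
  have hcard : ∀ D ∈ 𝒟, D.card ≤ q := by
    intro D hD
    obtain ⟨p₀, -, rfl⟩ := mem_image.1 hD
    exact hq p₀
  -- H as a class sum
  have hH : (univ.filter (fun pq : Fin m × Fin m => R pq.1 pq.2 ∧ ¬ E pq.1 pq.2)).card
      = ∑ D ∈ 𝒟, ∑ C ∈ 𝒞, (D ∩ C).card * (D \ C).card := by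
    have e1 : (univ.filter (fun pq : Fin m × Fin m => R pq.1 pq.2 ∧ ¬ E pq.1 pq.2)).card
        = ∑ p : Fin m, ((cls R p) \ (cls E p)).card := by
      rw [card_filter, Fintype.sum_prod_type]
      refine sum_congr rfl fun p _ => ?_
      rw [show cls R p \ cls E p = univ.filter (fun x => R p x ∧ ¬ E p x) by
        ext x; simp [cls], card_filter]
    rw [e1, sum_group_pair hR hE (fun D C => (D \ C).card)]
    have hsub : univ.image (fun p => (cls R p, cls E p)) ⊆ 𝒟 ×ˢ 𝒞 := by
      intro z hz
      obtain ⟨p, -, rfl⟩ := mem_image.1 hz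
      exact mem_product.2 ⟨mem_image_of_mem _ (mem_univ p), mem_image_of_mem _ (mem_univ p)⟩
    have hzero : ∀ z ∈ 𝒟 ×ˢ 𝒞, z ∉ univ.image (fun p => (cls R p, cls E p)) →
        (z.1 ∩ z.2).card * (z.1 \ z.2).card = 0 := by
      intro z hzp hzs
      rcases eq_or_ne (z.1 ∩ z.2).card 0 with h0 | h0
      · rw [h0, zero_mul]
      · obtain ⟨p, hp⟩ := card_ne_zero.1 h0
        exfalso
        apply hzs
        refine mem_image.2 ⟨p, mem_univ p, ?_⟩
        rw [mem_inter] at hp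
        rw [mem_of_mem_image_cls hR (mem_product.1 hzp).1 hp.1,
          mem_of_mem_image_cls hE (mem_product.1 hzp).2 hp.2]
    rw [sum_subset hsub hzero, Finset.sum_product]
  -- m as a class sum
  have hm : m = ∑ D ∈ 𝒟, D.card := by
    have h1 := sum_inter_card hR (univ : Finset (Fin m))
    simp only [univ_inter, card_univ, Fintype.card_fin] at h1
    exact h1.symm
  -- per-class card sums
  have hCc : ∀ C, C.card = ∑ D ∈ 𝒟, (D ∩ C).card := by
    intro C
    rw [← sum_inter_card hR C]
    exact sum_congr rfl fun D _ => by rw [inter_comm]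
  have hCc' : ∀ C : Finset (Fin m), (univ \ C).card = ∑ D ∈ 𝒟, (D \ C).card := by
    intro C
    rw [← sum_inter_card hR (univ \ C)]
    refine sum_congr rfl fun D _ => ?_
    congr 1
    ext x; simp only [mem_inter, mem_sdiff, mem_univ, true_and]; tauto
  -- reorder LHS
  have eqL : (∑ D ∈ 𝒟, D.card) * (∑ D ∈ 𝒟, ∑ C ∈ 𝒞, (D ∩ C).card * (D \ C).card)
      = ∑ C ∈ 𝒞, ∑ D ∈ 𝒟, ∑ D' ∈ 𝒟, D'.card * ((D ∩ C).card * (D \ C).card) := by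
    rw [sum_mul]
    have e2 : ∀ D' ∈ 𝒟, D'.card * (∑ D ∈ 𝒟, ∑ C ∈ 𝒞, (D ∩ C).card * (D \ C).card)
        = ∑ D ∈ 𝒟, ∑ C ∈ 𝒞, D'.card * ((D ∩ C).card * (D \ C).card) := by
      intro D' _
      rw [mul_sum]
      exact sum_congr rfl fun D _ => mul_sum _ _ _
    rw [sum_congr rfl e2]
    have s1 : ∑ D' ∈ 𝒟, ∑ D ∈ 𝒟, ∑ C ∈ 𝒞, D'.card * ((D ∩ C).card * (D \ C).card)
        = ∑ D ∈ 𝒟, ∑ D' ∈ 𝒟, ∑ C ∈ 𝒞, D'.card * ((D ∩ C).card * (D \ C).card) :=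
      Finset.sum_comm
    have s2 : ∑ D ∈ 𝒟, ∑ D' ∈ 𝒟, ∑ C ∈ 𝒞, D'.card * ((D ∩ C).card * (D \ C).card)
        = ∑ D ∈ 𝒟, ∑ C ∈ 𝒞, ∑ D' ∈ 𝒟, D'.card * ((D ∩ C).card * (D \ C).card) :=
      sum_congr rfl fun D _ => Finset.sum_comm
    have s3 : ∑ D ∈ 𝒟, ∑ C ∈ 𝒞, ∑ D' ∈ 𝒟, D'.card * ((D ∩ C).card * (D \ C).card)
        = ∑ C ∈ 𝒞, ∑ D ∈ 𝒟, ∑ D' ∈ 𝒟, D'.card * ((D ∩ C).card * (D \ C).card) :=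
      Finset.sum_comm
    exact s1.trans (s2.trans s3)
  -- reorder RHS
  have eqR : q * (∑ C ∈ 𝒞, C.card * (univ \ C).card)
      = ∑ C ∈ 𝒞, ∑ D ∈ 𝒟, ∑ D' ∈ 𝒟, q * ((D ∩ C).card * (D' \ C).card) := by
    rw [mul_sum]
    refine sum_congr rfl fun C _ => ?_
    rw [hCc C, hCc' C, Finset.sum_mul_sum, mul_sum]
    exact sum_congr rfl fun D _ => by rw [mul_sum]
  rw [hH, N_eq hE, eqR]
  have eqL' : m * (∑ D ∈ 𝒟, ∑ C ∈ 𝒞, (D ∩ C).card * (D \ C).card)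
      = ∑ C ∈ 𝒞, ∑ D ∈ 𝒟, ∑ D' ∈ 𝒟, D'.card * ((D ∩ C).card * (D \ C).card) := by
    rw [← eqL, ← hm]
  rw [eqL']
  -- per-class inequality via symmetrization
  refine sum_le_sum fun C _ => ?_
  have hsym : ∑ D ∈ 𝒟, ∑ D' ∈ 𝒟,
      (D'.card * ((D ∩ C).card * (D \ C).card) + D.card * ((D' ∩ C).card * (D' \ C).card))
      ≤ ∑ D ∈ 𝒟, ∑ D' ∈ 𝒟,
      (q * ((D ∩ C).card * (D' \ C).card) + q * ((D' ∩ C).card * (D \ C).card)) := by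
    refine sum_le_sum fun D hD => sum_le_sum fun D' hD' => ?_
    have h1 : (D ∩ C).card + (D \ C).card = D.card := card_inter_add_card_sdiff D C
    have h1' : (D' ∩ C).card + (D' \ C).card = D'.card := card_inter_add_card_sdiff D' C
    have h2 : (D ∩ C).card + (D \ C).card ≤ q := h1 ▸ hcard D hD
    have h2' : (D' ∩ C).card + (D' \ C).card ≤ q := h1' ▸ hcard D' hD'
    have hp := ptwise q (D ∩ C).card (D \ C).card (D' ∩ C).card (D' \ C).card h2 h2'
    rw [← h1, ← h1']
    linarith [hp]
  have swapf : ∑ D ∈ 𝒟, ∑ D' ∈ 𝒟, D.card * ((D' ∩ C).card * (D' \ C).card)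
      = ∑ D ∈ 𝒟, ∑ D' ∈ 𝒟, D'.card * ((D ∩ C).card * (D \ C).card) :=
    Finset.sum_comm
  have swapg : ∑ D ∈ 𝒟, ∑ D' ∈ 𝒟, q * ((D' ∩ C).card * (D \ C).card)
      = ∑ D ∈ 𝒟, ∑ D' ∈ 𝒟, q * ((D ∩ C).card * (D' \ C).card) :=
    Finset.sum_comm
  simp only [sum_add_distrib] at hsym
  rw [swapf, swapg] at hsym
  omega

lemma nbound {E : Fin m → Fin m → Prop} [DecidableRel E] (hE : Equivalence E) (t : ℕ)
    (hc : (univ.image (cls E)).card = t) :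
    m * (t - 1) ≤ (univ.filter (fun pq : Fin m × Fin m => ¬ E pq.1 pq.2)).card := by
  classical
  set 𝒞 := univ.image (cls E) with h𝒞
  rw [N_eq hE]
  have hsumcard : ∑ C ∈ 𝒞, C.card = m := by
    have h1 := sum_group hE (fun _ => 1)
    simp only [mul_one] at h1
    rw [← h1]
    simp
  have hnonempty : ∀ C ∈ 𝒞, 1 ≤ C.card := by
    intro C hC
    obtain ⟨p, -, rfl⟩ := mem_image.1 hC
    exact card_pos.2 ⟨p, mem_cls.2 (hE.refl p)⟩
  have hper : ∀ C ∈ 𝒞, t - 1 ≤ (univ \ C).card := by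
    intro C hC
    have h2 : C.card + ∑ C' ∈ 𝒞.erase C, C'.card = m := by
      rw [Finset.add_sum_erase _ _ hC, hsumcard]
    have h3 : t - 1 ≤ ∑ C' ∈ 𝒞.erase C, C'.card := by
      calc t - 1 = (𝒞.erase C).card := by rw [card_erase_of_mem hC, hc]
        _ = ∑ C' ∈ 𝒞.erase C, 1 := card_eq_sum_ones _
        _ ≤ ∑ C' ∈ 𝒞.erase C, C'.card :=
            sum_le_sum fun C' hC' => hnonempty C' (mem_of_mem_erase hC')
    have h4 : (univ \ C).card = m - C.card := by
      rw [card_sdiff_of_subset (subset_univ _), card_univ, Fintype.card_fin]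
    omega
  calc m * (t - 1) = ∑ C ∈ 𝒞, C.card * (t - 1) := by rw [← sum_mul, hsumcard]
    _ ≤ ∑ C ∈ 𝒞, C.card * (univ \ C).card :=
        sum_le_sum fun C hC => Nat.mul_le_mul_left _ (hper C hC)

/-- `L²` count for `su(m)`: let `~_1, …, ~_k` (`k ≥ 2`) be equivalence relations on
`Fin m` with largest class sizes `q_i`, and suppose `Σ q_i ≤ (k−1)m − 1`. Then for any
equivalence relation `≡` on `Fin m` with `t ≥ 2` classes, writing
`N = {(p,q) : ¬(p ≡ q)}` and `H_i = {(p,q) ∈ N : p ~_i q}`, we have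
`Σ_i |H_i| ≤ (k−1)|N| − (t−1)`, stated additively. -/
theorem su_L2_count (m k t : ℕ) (hm : 0 < m) (hk : 2 ≤ k) (ht : 2 ≤ t)
    (R : Fin k → Fin m → Fin m → Prop) [∀ i, DecidableRel (R i)]
    (hR : ∀ i, Equivalence (R i))
    (E : Fin m → Fin m → Prop) [DecidableRel E] (hE : Equivalence E)
    (q : Fin k → ℕ)
    (hqub : ∀ i p, (Finset.univ.filter (fun x => R i p x)).card ≤ q i)
    (hsum : (∑ i, q i) + 1 ≤ (k - 1) * m)
    (hclasses : (Finset.univ.image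
      (fun p : Fin m => Finset.univ.filter (fun x => E p x))).card = t) :
    (∑ i, (Finset.univ.filter (fun pq : Fin m × Fin m =>
        R i pq.1 pq.2 ∧ ¬ E pq.1 pq.2)).card) + (t - 1)
      ≤ (k - 1) * (Finset.univ.filter (fun pq : Fin m × Fin m =>
          ¬ E pq.1 pq.2)).card := by
  classical
  set Ncard := (Finset.univ.filter (fun pq : Fin m × Fin m => ¬ E pq.1 pq.2)).card with hN
  have hkey : ∀ i, m * (Finset.univ.filter (fun pq : Fin m × Fin m =>
      R i pq.1 pq.2 ∧ ¬ E pq.1 pq.2)).card ≤ q i * Ncard :=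
    fun i => key (q i) (R i) E (hR i) hE (hqub i)
  have hnb : m * (t - 1) ≤ Ncard := nbound hE t hclasses
  have hmain : m * ((∑ i, (Finset.univ.filter (fun pq : Fin m × Fin m =>
      R i pq.1 pq.2 ∧ ¬ E pq.1 pq.2)).card) + (t - 1)) ≤ m * ((k - 1) * Ncard) := by
    calc m * ((∑ i, (Finset.univ.filter (fun pq : Fin m × Fin m =>
          R i pq.1 pq.2 ∧ ¬ E pq.1 pq.2)).card) + (t - 1))
        = (∑ i, m * (Finset.univ.filter (fun pq : Fin m × Fin m =>
            R i pq.1 pq.2 ∧ ¬ E pq.1 pq.2)).card) + m * (t - 1) := by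
          rw [Nat.mul_add, Finset.mul_sum]
      _ ≤ (∑ i, q i * Ncard) + Ncard :=
          add_le_add (Finset.sum_le_sum fun i _ => hkey i) hnb
      _ = ((∑ i, q i) + 1) * Ncard := by rw [add_mul, one_mul, Finset.sum_mul]
      _ ≤ ((k - 1) * m) * Ncard := Nat.mul_le_mul_right _ hsum
      _ = m * ((k - 1) * Ncard) := by ring
  exact Nat.le_of_mul_le_mul_left hmain hm
end
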